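/- Let s ∈ (0, 1/2], c ∈ ℝ, and let Ω ⊂ ℝ be a bounded open set with (−2, 2) ⊆ Ω. For ρ ∈ (0,1) define φ_ρ : ℝ → ℝ by φ_ρ(x) := c + 1 if |x| < ρ; φ_ρ(x) := c + log|x|/log ρ if ρ ≤ |x| < 1; and φ_ρ(x) := c if |x| ≥ 1. Then, with Q := ℝ² \ ((ℝ\Ω)×(ℝ\Ω)), one has lim_{ρ→0⁺} ∬_Q |φ_ρ(x) − φ_ρ(y)|²/|x−y|^{1+2s} dx dy = 0. -/

import Mathlib

open MeasureTheory Set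
open scoped ENNReal Topology

noncomputable section

/-- The cross-shaped region `Q := ℝ² \ ((ℝ\Ω)×(ℝ\Ω))`. -/
def QQ1 (Ω : Set ℝ) : Set (ℝ × ℝ) := ((Ωᶜ) ×ˢ (Ωᶜ))ᶜ

/-- The Gagliardo-type energy `∬_Q |u(x)-u(y)|²/|x-y|^{1+2s} dx dy`, valued in `[0,∞]`. -/
def gagEnergy1 (s : ℝ) (Ω : Set ℝ) (u : ℝ → ℝ) : ℝ≥0∞ :=
  ∫⁻ p in QQ1 Ω, ENNReal.ofReal (|u p.1 - u p.2| ^ 2 / |p.1 - p.2| ^ (1 + 2 * s))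

/-- The auxiliary function `φ_ρ` of logarithmic type. -/
def phiRhoLog (c ρ : ℝ) (x : ℝ) : ℝ :=
  if |x| < ρ then c + 1
  else if |x| < 1 then c + Real.log |x| / Real.log ρ
  else c

namespace Stmt19

lemma clamp_lip (a b : ℝ) : |max 0 (min 1 a) - max 0 (min 1 b)| ≤ |a - b| := by
  have h1 : |max 0 (min 1 a) - max 0 (min 1 b)| ≤ |min 1 a - min 1 b| := by
    rw [max_comm 0 (min 1 a), max_comm 0 (min 1 b)]
    exact abs_max_sub_max_le_abs _ _ _
  refine h1.trans ?_
  simpa using abs_min_sub_min_le_max 1 a 1 b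

lemma phi_eq (c : ℝ) {ρ : ℝ} (h0 : 0 < ρ) (h1 : ρ < 1) (x : ℝ) :
    phiRhoLog c ρ x = c + max 0 (min 1 (Real.log (max |x| ρ) / Real.log ρ)) := by
  have hlρ : Real.log ρ < 0 := Real.log_neg h0 h1
  unfold phiRhoLog
  rcases lt_or_ge |x| ρ with hx | hx
  · rw [if_pos hx, max_eq_right hx.le, div_self hlρ.ne]
    norm_num
  · rw [if_neg (not_lt.2 hx), max_eq_left hx]
    rcases lt_or_ge |x| 1 with hx1 | hx1
    · rw [if_pos hx1]
      have hxpos : 0 < |x| := lt_of_lt_of_le h0 hx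
      have hlx : Real.log |x| ≤ 0 := Real.log_nonpos (abs_nonneg x) hx1.le
      have hge : Real.log ρ ≤ Real.log |x| := Real.log_le_log h0 hx
      have h01 : Real.log |x| / Real.log ρ ≤ 1 := by
        rw [div_le_one_iff]
        exact Or.inr (Or.inr ⟨hlρ, hge⟩)
      have h00 : 0 ≤ Real.log |x| / Real.log ρ := div_nonneg_of_nonpos hlx hlρ.le
      rw [min_eq_right h01, max_eq_right h00]
    · rw [if_neg (not_lt.2 hx1)]
      have hr : Real.log |x| / Real.log ρ ≤ 0 :=
        div_nonpos_of_nonneg_of_nonpos (Real.log_nonneg hx1) hlρ.le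
      rw [min_eq_right (hr.trans zero_le_one), max_eq_left hr, add_zero]

lemma phi_diff_le (c : ℝ) {ρ : ℝ} (h0 : 0 < ρ) (h1 : ρ < 1) (x y : ℝ) :
    |phiRhoLog c ρ x - phiRhoLog c ρ y| ≤
      |Real.log (max |x| ρ) - Real.log (max |y| ρ)| / (-Real.log ρ) := by
  have hlρ : Real.log ρ < 0 := Real.log_neg h0 h1
  rw [phi_eq c h0 h1 x, phi_eq c h0 h1 y, add_sub_add_left_eq_sub]
  refine (clamp_lip _ _).trans (le_of_eq ?_)
  rw [div_sub_div_same, abs_div, abs_of_neg hlρ]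

def hker (s ρ : ℝ) (y x : ℝ) : ℝ≥0∞ :=
  if |y| < 1 ∧ max |y| ρ < |x| then
    ENNReal.ofReal (Real.log (|x| / max |y| ρ) ^ 2 /
      ((|x| - max |y| ρ) ^ (1 + 2 * s) * Real.log ρ ^ 2))
  else 0

lemma hker_meas {s : ℝ} (hs0 : 0 < s) (ρ : ℝ) : Measurable fun p : ℝ × ℝ => hker s ρ p.1 p.2 := by
  unfold hker
  have hS : MeasurableSet {p : ℝ × ℝ | |p.1| < 1 ∧ max |p.1| ρ < |p.2|} := by
    rw [setOf_and]
    exact ((isOpen_lt (by fun_prop) continuous_const).inter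
      (isOpen_lt (by fun_prop) (by fun_prop))).measurableSet
  refine Measurable.ite hS ?_ measurable_const
  apply ENNReal.measurable_ofReal.comp
  apply Measurable.div
  · exact ((measurable_snd.abs.div ((measurable_fst.abs).max measurable_const)).log).pow_const 2
  · apply Measurable.mul _ measurable_const
    exact ((Real.continuous_rpow_const (by linarith)).comp
      ((continuous_snd.abs.sub (continuous_fst.abs.max continuous_const)))).measurable

lemma pointwise_key {s : ℝ} (hs0 : 0 < s) (c : ℝ) {ρ : ℝ} (h0 : 0 < ρ) (h1 : ρ < 1)
    {x y : ℝ} (hxy : |y| ≤ |x|) :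
    ENNReal.ofReal (|phiRhoLog c ρ x - phiRhoLog c ρ y| ^ 2 / |x - y| ^ (1 + 2 * s)) ≤
      hker s ρ y x := by
  have hlρ : Real.log ρ < 0 := Real.log_neg h0 h1
  have hL : 0 < -Real.log ρ := by linarith
  set b := max |y| ρ with hbdef
  have hbpos : 0 < b := lt_max_of_lt_right h0
  have hρb : ρ ≤ b := le_max_right _ _
  rcases le_or_gt |x| b with hxb | hxb
  · -- here the φ-difference vanishes
    have hmm : max |x| ρ = b := le_antisymm (max_le hxb hρb)
      (max_le_max hxy le_rfl)
    have h := phi_diff_le c h0 h1 x y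
    rw [hmm, sub_self, abs_zero, zero_div] at h
    have h0' : |phiRhoLog c ρ x - phiRhoLog c ρ y| = 0 := le_antisymm h (abs_nonneg _)
    rw [h0']
    simp
  · rcases le_or_gt 1 |y| with hy1 | hy1
    · -- both |x|,|y| ≥ 1 : φ x = φ y = c
      have hx1 : (1:ℝ) ≤ |x| := hy1.trans hxy
      have hφx : phiRhoLog c ρ x = c := by
        unfold phiRhoLog
        rw [if_neg (not_lt.2 (h1.le.trans hx1)), if_neg (not_lt.2 hx1)]
      have hφy : phiRhoLog c ρ y = c := by
        unfold phiRhoLog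
        rw [if_neg (not_lt.2 (h1.le.trans hy1)), if_neg (not_lt.2 hy1)]
      rw [hφx, hφy, sub_self, abs_zero]
      simp
    · rw [hker, if_pos ⟨hy1, hxb⟩]
      apply ENNReal.ofReal_le_ofReal
      have hxpos : 0 < |x| := hbpos.trans hxb
      have hmx : max |x| ρ = |x| := max_eq_left (hρb.trans hxb.le)
      have hlog_nonneg : 0 ≤ Real.log (|x| / b) :=
        Real.log_nonneg ((one_le_div hbpos).2 hxb.le)
      have hA : |phiRhoLog c ρ x - phiRhoLog c ρ y| ≤ Real.log (|x| / b) / (-Real.log ρ) := by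
        have h := phi_diff_le c h0 h1 x y
        rw [hmx, ← hbdef, abs_of_nonneg (sub_nonneg.2 (Real.log_le_log hbpos hxb.le)),
          ← Real.log_div hxpos.ne' hbpos.ne'] at h
        exact h
      have hsub : 0 < |x| - b := sub_pos.2 hxb
      have hdenpos : 0 < (|x| - b) ^ (1 + 2 * s) := Real.rpow_pos_of_pos hsub _
      have hden : (|x| - b) ^ (1 + 2 * s) ≤ |x - y| ^ (1 + 2 * s) := by
        apply Real.rpow_le_rpow hsub.le ?_ (by linarith)
        have h1' : |x| - b ≤ |x| - |y| := by
          have := le_max_left |y| ρ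
          linarith [hbdef ▸ this]
        exact h1'.trans (abs_sub_abs_le_abs_sub x y)
      have hnum : |phiRhoLog c ρ x - phiRhoLog c ρ y| ^ 2 ≤
          Real.log (|x| / b) ^ 2 / Real.log ρ ^ 2 := by
        have h2 := pow_le_pow_left₀ (abs_nonneg _) hA 2
        calc |phiRhoLog c ρ x - phiRhoLog c ρ y| ^ 2
            ≤ (Real.log (|x| / b) / (-Real.log ρ)) ^ 2 := h2
          _ = Real.log (|x| / b) ^ 2 / Real.log ρ ^ 2 := by
              rw [div_pow, neg_pow]
              ring_nf
      calc |phiRhoLog c ρ x - phiRhoLog c ρ y| ^ 2 / |x - y| ^ (1 + 2 * s)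
          ≤ (Real.log (|x| / b) ^ 2 / Real.log ρ ^ 2) / ((|x| - b) ^ (1 + 2 * s)) :=
            div_le_div₀ (by positivity) hnum hdenpos hden
        _ = Real.log (|x| / b) ^ 2 / ((|x| - b) ^ (1 + 2 * s) * Real.log ρ ^ 2) := by
            rw [div_div, mul_comm]

lemma pointwise_sum {s : ℝ} (hs0 : 0 < s) (c : ℝ) {ρ : ℝ} (h0 : 0 < ρ) (h1 : ρ < 1)
    (p : ℝ × ℝ) :
    ENNReal.ofReal (|phiRhoLog c ρ p.1 - phiRhoLog c ρ p.2| ^ 2 / |p.1 - p.2| ^ (1 + 2 * s)) ≤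
      hker s ρ p.2 p.1 + hker s ρ p.1 p.2 := by
  rcases le_total |p.2| |p.1| with h | h
  · exact le_add_right (pointwise_key hs0 c h0 h1 h)
  · rw [abs_sub_comm (phiRhoLog c ρ p.1), abs_sub_comm p.1 p.2]
    exact le_add_left (pointwise_key hs0 c h0 h1 h)

lemma lintegral_comp_abs (G : ℝ → ℝ≥0∞) (hG : Measurable G) :
    ∫⁻ x : ℝ, G |x| = 2 * ∫⁻ t in Ioi (0:ℝ), G t := by
  have hneg : MeasurePreserving (fun x : ℝ => -x) volume volume :=
    Measure.measurePreserving_neg _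
  have hemb : MeasurableEmbedding (fun x : ℝ => -x) :=
    (Homeomorph.neg ℝ).measurableEmbedding
  have h1 : ∫⁻ x in Iic (0:ℝ), G |x| = ∫⁻ x in Ioi (0:ℝ), G x := by
    have h2 := hneg.setLIntegral_comp_emb hemb (fun t => G |t|) (Ici (0:ℝ))
    simp only [abs_neg] at h2
    have himg : (fun x : ℝ => -x) '' Ici (0:ℝ) = Iic (0:ℝ) := by
      rw [show (fun x : ℝ => -x) = Neg.neg from rfl, Set.image_neg_eq_neg, Set.neg_Ici, neg_zero]
    rw [himg] at h2
    rw [← h2]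
    have h3 : ∫⁻ x in Ici (0:ℝ), G |x| = ∫⁻ x in Ioi (0:ℝ), G x := by
      rw [← MeasureTheory.Measure.restrict_congr_set Ioi_ae_eq_Ici]
      refine setLIntegral_congr_fun measurableSet_Ioi ?_
      intro x hx
      simp only [abs_of_pos (mem_Ioi.1 hx)]
    exact h3
  have h4 : ∫⁻ x in Ioi (0:ℝ), G |x| = ∫⁻ x in Ioi (0:ℝ), G x := by
    refine setLIntegral_congr_fun measurableSet_Ioi ?_
    intro x hx
    simp only [abs_of_pos (mem_Ioi.1 hx)]
  calc ∫⁻ x : ℝ, G |x| = (∫⁻ x in Iic (0:ℝ), G |x|) + ∫⁻ x in Ioi (0:ℝ), G |x| := by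
        rw [← lintegral_add_compl (fun x => G |x|) measurableSet_Iic, compl_Iic]
    _ = 2 * ∫⁻ t in Ioi (0:ℝ), G t := by
        rw [h1, h4, two_mul]

lemma tail_bound {s ρ b : ℝ} (hs0 : 0 < s) (hs1 : s ≤ 1/2) (h0 : 0 < ρ) (h1 : ρ < 1)
    (hb : 0 < b) :
    ∫⁻ t in Ioi b, ENNReal.ofReal (Real.log (t / b) ^ 2 /
        ((t - b) ^ (1 + 2 * s) * Real.log ρ ^ 2))
      ≤ ENNReal.ofReal ((1 + 16 / s ^ 3) * b ^ (-(2 * s)) / Real.log ρ ^ 2) := by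
  have hlρ : Real.log ρ < 0 := Real.log_neg h0 h1
  have hl2 : 0 < Real.log ρ ^ 2 := by nlinarith [hlρ]
  have hs2 : 0 ≤ 1 - 2 * s := by linarith
  have hb2 : b ≤ 2 * b := by linarith
  rw [← Ioc_union_Ioi_eq_Ioi hb2, lintegral_union measurableSet_Ioi (Ioc_disjoint_Ioi le_rfl)]
  have piece1 : ∫⁻ t in Ioc b (2*b), ENNReal.ofReal (Real.log (t / b) ^ 2 /
        ((t - b) ^ (1 + 2 * s) * Real.log ρ ^ 2))
      ≤ ENNReal.ofReal (b ^ (-(2 * s)) / Real.log ρ ^ 2) := by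
    have hpt : ∀ t ∈ Ioc b (2*b), ENNReal.ofReal (Real.log (t / b) ^ 2 /
        ((t - b) ^ (1 + 2 * s) * Real.log ρ ^ 2))
        ≤ ENNReal.ofReal (b ^ (-(1 + 2 * s)) / Real.log ρ ^ 2) := by
      intro t ht
      apply ENNReal.ofReal_le_ofReal
      have htb : 0 < t - b := sub_pos.2 ht.1
      have htpos : 0 < t := hb.trans ht.1
      have hlog0 : 0 ≤ Real.log (t / b) := Real.log_nonneg ((one_le_div hb).2 ht.1.le)
      have hlog1 : Real.log (t / b) ≤ (t - b) / b := by
        have := Real.log_le_sub_one_of_pos (div_pos htpos hb)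
        calc Real.log (t / b) ≤ t / b - 1 := this
          _ = (t - b) / b := by field_simp
      have hnum : Real.log (t / b) ^ 2 ≤ (t - b) ^ 2 / b ^ 2 := by
        calc Real.log (t / b) ^ 2 ≤ ((t - b) / b) ^ 2 := pow_le_pow_left₀ hlog0 hlog1 2
          _ = (t - b) ^ 2 / b ^ 2 := div_pow _ _ 2
      have hrpow : (t - b) ^ 2 / (t - b) ^ (1 + 2 * s) = (t - b) ^ (1 - 2 * s) := by
        rw [← Real.rpow_natCast (t - b) 2, ← Real.rpow_sub htb]
        congr 1
        push_cast
        ring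
      have hle1 : (t - b) ^ (1 - 2 * s) ≤ b ^ (1 - 2 * s) :=
        Real.rpow_le_rpow htb.le (by linarith [ht.2]) hs2
      have hbb : b ^ (1 - 2 * s) / b ^ 2 = b ^ (-(1 + 2 * s)) := by
        rw [← Real.rpow_natCast b 2, ← Real.rpow_sub hb]
        congr 1
        push_cast
        ring
      calc Real.log (t / b) ^ 2 / ((t - b) ^ (1 + 2 * s) * Real.log ρ ^ 2)
          ≤ ((t - b) ^ 2 / b ^ 2) / ((t - b) ^ (1 + 2 * s) * Real.log ρ ^ 2) := by
            gcongr
        _ = ((t - b) ^ 2 / (t - b) ^ (1 + 2 * s)) / b ^ 2 / Real.log ρ ^ 2 := by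
            ring
        _ = (t - b) ^ (1 - 2 * s) / b ^ 2 / Real.log ρ ^ 2 := by rw [hrpow]
        _ ≤ b ^ (1 - 2 * s) / b ^ 2 / Real.log ρ ^ 2 := by
            gcongr
        _ = b ^ (-(1 + 2 * s)) / Real.log ρ ^ 2 := by rw [hbb]
    calc ∫⁻ t in Ioc b (2*b), ENNReal.ofReal (Real.log (t / b) ^ 2 /
        ((t - b) ^ (1 + 2 * s) * Real.log ρ ^ 2))
        ≤ ∫⁻ _t in Ioc b (2*b), ENNReal.ofReal (b ^ (-(1 + 2 * s)) / Real.log ρ ^ 2) :=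
          setLIntegral_mono' measurableSet_Ioc hpt
      _ = ENNReal.ofReal (b ^ (-(1 + 2 * s)) / Real.log ρ ^ 2) * ENNReal.ofReal b := by
          rw [setLIntegral_const, Real.volume_Ioc]
          congr 1
          ring_nf
      _ = ENNReal.ofReal (b ^ (-(1 + 2 * s)) / Real.log ρ ^ 2 * b) := by
          rw [ENNReal.ofReal_mul (by positivity)]
      _ = ENNReal.ofReal (b ^ (-(2 * s)) / Real.log ρ ^ 2) := by
          congr 1
          rw [div_mul_eq_mul_div, ← Real.rpow_add_one hb.ne',
            show -(1 + 2 * s) + 1 = -(2 * s) by ring]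
  have piece2 : ∫⁻ t in Ioi (2*b), ENNReal.ofReal (Real.log (t / b) ^ 2 /
        ((t - b) ^ (1 + 2 * s) * Real.log ρ ^ 2))
      ≤ ENNReal.ofReal (16 / s ^ 3 * b ^ (-(2 * s)) / Real.log ρ ^ 2) := by
    set K2 : ℝ := 16 / s ^ 2 * (b ^ (-s)) / Real.log ρ ^ 2 with hK2
    have hbs : 0 < b ^ (-s) := Real.rpow_pos_of_pos hb _
    have hK2nn : 0 ≤ K2 := by positivity
    have hpt : ∀ t ∈ Ioi (2*b), ENNReal.ofReal (Real.log (t / b) ^ 2 /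
        ((t - b) ^ (1 + 2 * s) * Real.log ρ ^ 2))
        ≤ ENNReal.ofReal (K2 * t ^ (-(1 + s))) := by
      intro t ht
      apply ENNReal.ofReal_le_ofReal
      have htb2 : 2 * b < t := ht
      have htpos : 0 < t := by linarith
      have hdiv : 0 < t / b := div_pos htpos hb
      have htb1 : 1 ≤ t / b := (one_le_div hb).2 (by linarith)
      have hhalf : 0 < s / 2 := by linarith
      set X : ℝ := (t / b) ^ (s / 2) with hX
      have hXpos : 0 < X := Real.rpow_pos_of_pos hdiv _
      have hlog0 : 0 ≤ Real.log (t / b) := Real.log_nonneg htb1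
      have hlog : Real.log (t / b) ≤ 2 / s * X := by
        have e1 : Real.log ((t / b) ^ (s / 2)) = s / 2 * Real.log (t / b) :=
          Real.log_rpow hdiv _
        have e2 : Real.log ((t / b) ^ (s / 2)) ≤ X :=
          (Real.log_le_sub_one_of_pos hXpos).trans (by linarith)
        have e3 : Real.log (t / b) * (s / 2) ≤ X := by
          rw [mul_comm]; linarith
        have e4 : Real.log (t / b) ≤ X / (s / 2) := (le_div_iff₀ hhalf).2 e3
        calc Real.log (t / b) ≤ X / (s / 2) := e4
          _ = 2 / s * X := by field_simp
      have hlogsq : Real.log (t / b) ^ 2 ≤ 4 / s ^ 2 * (t / b) ^ s := by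
        calc Real.log (t / b) ^ 2 ≤ (2 / s * X) ^ 2 := pow_le_pow_left₀ hlog0 hlog 2
          _ = 4 / s ^ 2 * X ^ 2 := by ring
          _ = 4 / s ^ 2 * (t / b) ^ s := by
              rw [hX, ← Real.rpow_natCast ((t / b) ^ (s / 2)) 2, ← Real.rpow_mul hdiv.le]
              norm_num
      have h12 : (0:ℝ) ≤ 1 + 2 * s := by linarith
      have hden : t ^ (1 + 2 * s) / 4 ≤ (t - b) ^ (1 + 2 * s) := by
        have e4 : (t / 2) ^ (1 + 2 * s) ≤ (t - b) ^ (1 + 2 * s) :=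
          Real.rpow_le_rpow (by linarith) (by linarith) h12
        have e5 : (t / 2) ^ (1 + 2 * s) = t ^ (1 + 2 * s) / 2 ^ (1 + 2 * s) :=
          Real.div_rpow htpos.le (by norm_num : (0:ℝ) ≤ 2) _
        have e6 : (2:ℝ) ^ (1 + 2 * s) ≤ 4 := by
          calc (2:ℝ) ^ (1 + 2 * s) ≤ (2:ℝ) ^ ((2:ℕ):ℝ) :=
                Real.rpow_le_rpow_of_exponent_le one_le_two (by push_cast; linarith)
            _ = 4 := by rw [Real.rpow_natCast]; norm_num
        have e7 : (0:ℝ) < 2 ^ (1 + 2 * s) := Real.rpow_pos_of_pos two_pos _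
        have e8 : t ^ (1 + 2 * s) / 4 ≤ t ^ (1 + 2 * s) / 2 ^ (1 + 2 * s) := by
          apply div_le_div_of_nonneg_left (Real.rpow_nonneg htpos.le _) e7 e6
        linarith [e5 ▸ e4]
      have hdpos : 0 < t ^ (1 + 2 * s) / 4 * Real.log ρ ^ 2 :=
        mul_pos (by positivity) hl2
      have main : Real.log (t / b) ^ 2 / ((t - b) ^ (1 + 2 * s) * Real.log ρ ^ 2)
          ≤ (4 / s ^ 2 * (t / b) ^ s) / ((t ^ (1 + 2 * s) / 4) * Real.log ρ ^ 2) := by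
        apply div_le_div₀ (by positivity) hlogsq hdpos
        exact mul_le_mul_of_nonneg_right hden hl2.le
      refine main.trans (le_of_eq ?_)
      have hts : (0:ℝ) < t ^ s := Real.rpow_pos_of_pos htpos _
      have ht1s : (0:ℝ) < t ^ (1 + s) := Real.rpow_pos_of_pos htpos _
      have hsplit : t ^ (1 + 2 * s) = t ^ (1 + s) * t ^ s := by
        rw [← Real.rpow_add htpos]; congr 1; ring
      have hdivr : (t / b) ^ s = t ^ s / b ^ s := Real.div_rpow htpos.le hb.le _
      have hbneg : b ^ (-s) = (b ^ s)⁻¹ := Real.rpow_neg hb.le s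
      have htneg : t ^ (-(1 + s)) = (t ^ (1 + s))⁻¹ := Real.rpow_neg htpos.le _
      rw [hdivr, hsplit, hK2, hbneg, htneg]
      have hbs' : (0:ℝ) < b ^ s := Real.rpow_pos_of_pos hb _
      field_simp
      ring
    calc ∫⁻ t in Ioi (2*b), ENNReal.ofReal (Real.log (t / b) ^ 2 /
        ((t - b) ^ (1 + 2 * s) * Real.log ρ ^ 2))
        ≤ ∫⁻ t in Ioi (2*b), ENNReal.ofReal (K2 * t ^ (-(1 + s))) :=
          setLIntegral_mono' measurableSet_Ioi hpt
      _ = ENNReal.ofReal (∫ t in Ioi (2*b), K2 * t ^ (-(1 + s))) := by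
          rw [← ofReal_integral_eq_lintegral_ofReal]
          · exact (integrableOn_Ioi_rpow_of_lt (by linarith) (by linarith)).const_mul K2
          · filter_upwards [ae_restrict_mem measurableSet_Ioi] with t ht
            have : (0:ℝ) < t := lt_trans (by linarith) ht
            have := Real.rpow_nonneg this.le (-(1 + s))
            exact mul_nonneg hK2nn this
      _ ≤ ENNReal.ofReal (16 / s ^ 3 * b ^ (-(2 * s)) / Real.log ρ ^ 2) := by
          apply ENNReal.ofReal_le_ofReal
          rw [integral_const_mul, integral_Ioi_rpow_of_lt (by linarith)
            (by linarith), show -(1 + s) + 1 = -s by ring, neg_div_neg_eq]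
          have h2b : (2*b) ^ (-s) ≤ b ^ (-s) :=
            Real.rpow_le_rpow_of_nonpos hb (by linarith) (by linarith)
          have step : K2 * ((2*b) ^ (-s) / s) ≤ K2 * (b ^ (-s) / s) := by gcongr
          refine step.trans (le_of_eq ?_)
          have hbb : b ^ (-s) * b ^ (-s) = b ^ (-(2*s)) := by
            rw [← Real.rpow_add hb]; congr 1; ring
          rw [hK2, ← hbb]
          field_simp
  calc (∫⁻ t in Ioc b (2*b), ENNReal.ofReal (Real.log (t / b) ^ 2 /
        ((t - b) ^ (1 + 2 * s) * Real.log ρ ^ 2))) +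
        ∫⁻ t in Ioi (2*b), ENNReal.ofReal (Real.log (t / b) ^ 2 /
        ((t - b) ^ (1 + 2 * s) * Real.log ρ ^ 2))
      ≤ ENNReal.ofReal (b ^ (-(2 * s)) / Real.log ρ ^ 2) +
        ENNReal.ofReal (16 / s ^ 3 * b ^ (-(2 * s)) / Real.log ρ ^ 2) :=
        add_le_add piece1 piece2
    _ = ENNReal.ofReal (b ^ (-(2 * s)) / Real.log ρ ^ 2 +
        16 / s ^ 3 * b ^ (-(2 * s)) / Real.log ρ ^ 2) :=
        (ENNReal.ofReal_add (by positivity) (by positivity)).symm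
    _ = ENNReal.ofReal ((1 + 16 / s ^ 3) * b ^ (-(2 * s)) / Real.log ρ ^ 2) := by
        congr 1; ring

lemma inner_zero (s ρ : ℝ) {y : ℝ} (hy : 1 ≤ |y|) : ∫⁻ x, hker s ρ y x = 0 := by
  have : ∀ x, hker s ρ y x = 0 := by
    intro x
    unfold hker
    rw [if_neg]
    rintro ⟨h1, -⟩
    exact absurd h1 (not_lt.2 hy)
  simp [this]

lemma inner_lt {s ρ : ℝ} (hs0 : 0 < s) (hs1 : s ≤ 1/2) (h0 : 0 < ρ) (h1 : ρ < 1)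
    {y : ℝ} (hy : |y| < 1) :
    ∫⁻ x, hker s ρ y x ≤
      ENNReal.ofReal (2 * ((1 + 16 / s ^ 3) * (max |y| ρ) ^ (-(2 * s)) / Real.log ρ ^ 2)) := by
  set b := max |y| ρ with hbdef
  have hbpos : 0 < b := lt_max_of_lt_right h0
  set G : ℝ → ℝ≥0∞ := fun t => if b < t then ENNReal.ofReal (Real.log (t / b) ^ 2 /
      ((t - b) ^ (1 + 2 * s) * Real.log ρ ^ 2)) else 0 with hG
  have hGeq : ∀ x, hker s ρ y x = G |x| := by
    intro x
    by_cases hx : b < |x|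
    · simp only [hker, hG, ← hbdef, if_pos hx]
      rw [if_pos ⟨hy, hx⟩]
    · simp only [hker, hG, ← hbdef, if_neg hx]
      rw [if_neg]
      rintro ⟨-, h2⟩
      exact hx h2
  have hGm : Measurable G := by
    refine Measurable.ite measurableSet_Ioi ?_ measurable_const
    apply ENNReal.measurable_ofReal.comp
    apply Measurable.div
    · exact (Real.measurable_log.comp (measurable_id.div_const b)).pow_const 2
    · exact (((Real.continuous_rpow_const (by linarith)).comp
        (continuous_id.sub continuous_const)).measurable).mul_const _
  have hres : ∫⁻ t in Ioi (0:ℝ), G t = ∫⁻ t in Ioi b, ENNReal.ofReal (Real.log (t / b) ^ 2 /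
      ((t - b) ^ (1 + 2 * s) * Real.log ρ ^ 2)) := by
    have hid : ∀ t, G t = (Ioi b).indicator (fun t => ENNReal.ofReal (Real.log (t / b) ^ 2 /
        ((t - b) ^ (1 + 2 * s) * Real.log ρ ^ 2))) t := by
      intro t
      rw [hG, Set.indicator_apply]
      simp [mem_Ioi]
    rw [lintegral_congr hid, lintegral_indicator measurableSet_Ioi,
      Measure.restrict_restrict measurableSet_Ioi,
      inter_eq_left.2 (Ioi_subset_Ioi hbpos.le)]
  calc ∫⁻ x, hker s ρ y x = ∫⁻ x : ℝ, G |x| := lintegral_congr hGeq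
    _ = 2 * ∫⁻ t in Ioi (0:ℝ), G t := lintegral_comp_abs G hGm
    _ ≤ 2 * ENNReal.ofReal ((1 + 16 / s ^ 3) * b ^ (-(2 * s)) / Real.log ρ ^ 2) := by
        rw [hres]
        exact mul_le_mul_right (tail_bound hs0 hs1 h0 h1 hbpos) 2
    _ = ENNReal.ofReal (2 * ((1 + 16 / s ^ 3) * b ^ (-(2 * s)) / Real.log ρ ^ 2)) := by
        rw [ENNReal.ofReal_mul (by norm_num : (0:ℝ) ≤ 2)]
        norm_num

lemma outer_bound {s ρ : ℝ} (hs0 : 0 < s) (hs1 : s ≤ 1/2) (h0 : 0 < ρ) (h1 : ρ < 1) :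
    ∫⁻ y : ℝ, ∫⁻ x, hker s ρ y x ≤
      ENNReal.ofReal (4 * (1 + 16 / s ^ 3) *
        ((-Real.log ρ)⁻¹ + (-Real.log ρ)⁻¹ * (-Real.log ρ)⁻¹)) := by
  have hlρ : Real.log ρ < 0 := Real.log_neg h0 h1
  have hL : 0 < -Real.log ρ := by linarith
  have hl2 : 0 < Real.log ρ ^ 2 := by nlinarith
  have hCs0 : (0:ℝ) < 1 + 16 / s ^ 3 := by positivity
  set F : ℝ → ℝ≥0∞ := fun t => if t < 1 then
      ENNReal.ofReal (2 * ((1 + 16 / s ^ 3) * (max t ρ) ^ (-(2 * s)) / Real.log ρ ^ 2))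
    else 0 with hF
  have step1 : ∫⁻ y : ℝ, ∫⁻ x, hker s ρ y x ≤ ∫⁻ y : ℝ, F |y| := by
    apply lintegral_mono
    intro y
    show (∫⁻ x, hker s ρ y x) ≤ F |y|
    by_cases hy : |y| < 1
    · rw [hF]
      simp only [if_pos hy]
      exact inner_lt hs0 hs1 h0 h1 hy
    · rw [inner_zero s ρ (not_lt.1 hy)]
      exact zero_le
  have hFm : Measurable F := by
    refine Measurable.ite measurableSet_Iio ?_ measurable_const
    apply ENNReal.measurable_ofReal.comp
    apply Measurable.const_mul
    apply Measurable.div_const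
    apply Measurable.const_mul
    have hrp : Continuous fun t : ℝ => (max t ρ) ^ (-(2*s)) :=
      (continuous_id.max continuous_const).rpow_const
        (fun t => Or.inl (ne_of_gt (lt_max_of_lt_right h0)))
    exact hrp.measurable
  set c2 : ℝ := 2 * (1 + 16 / s ^ 3) / Real.log ρ ^ 2 with hc2
  have hc2nn : 0 ≤ c2 := by
    rw [hc2]
    apply div_nonneg (by linarith) hl2.le
  have hXnn : 0 ≤ (1 + 16 / s ^ 3) * ρ ^ (-(2 * s)) / Real.log ρ ^ 2 :=
    div_nonneg (mul_nonneg hCs0.le (Real.rpow_nonneg h0.le _)) hl2.le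
  have pieceA : ∫⁻ t in Ioc (0:ℝ) ρ, F t ≤ ENNReal.ofReal c2 := by
    have hpt : ∀ t ∈ Ioc (0:ℝ) ρ, F t ≤
        ENNReal.ofReal (2 * ((1 + 16 / s ^ 3) * ρ ^ (-(2 * s)) / Real.log ρ ^ 2)) := by
      intro t ht
      rw [hF]
      simp only
      rw [if_pos (lt_of_le_of_lt ht.2 h1), max_eq_right ht.2]
    calc ∫⁻ t in Ioc (0:ℝ) ρ, F t
        ≤ ∫⁻ _t in Ioc (0:ℝ) ρ,
            ENNReal.ofReal (2 * ((1 + 16 / s ^ 3) * ρ ^ (-(2 * s)) / Real.log ρ ^ 2)) :=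
          setLIntegral_mono' measurableSet_Ioc hpt
      _ = ENNReal.ofReal (2 * ((1 + 16 / s ^ 3) * ρ ^ (-(2 * s)) / Real.log ρ ^ 2)) *
            ENNReal.ofReal ρ := by
          rw [setLIntegral_const, Real.volume_Ioc]
          congr 1
          ring_nf
      _ = ENNReal.ofReal (2 * ((1 + 16 / s ^ 3) * ρ ^ (-(2 * s)) / Real.log ρ ^ 2) * ρ) :=
          (ENNReal.ofReal_mul (mul_nonneg (by norm_num) hXnn)).symm
      _ ≤ ENNReal.ofReal c2 := by
          apply ENNReal.ofReal_le_ofReal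
          have hρ1 : ρ ^ (1 - 2 * s) ≤ 1 := Real.rpow_le_one h0.le h1.le (by linarith)
          have heq : 2 * ((1 + 16 / s ^ 3) * ρ ^ (-(2 * s)) / Real.log ρ ^ 2) * ρ
              = c2 * ρ ^ (1 - 2 * s) := by
            rw [hc2, show ρ ^ (1 - 2 * s) = ρ ^ (-(2 * s)) * ρ by
              rw [← Real.rpow_add_one h0.ne']; congr 1; ring]
            ring
          rw [heq]
          exact (mul_le_of_le_one_right hc2nn hρ1)
  have pieceB : ∫⁻ t in Ioi ρ, F t ≤ ENNReal.ofReal (c2 * (-Real.log ρ)) := by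
    have hpt : ∀ t ∈ Ioi ρ, F t ≤
        (Ioo ρ 1).indicator (fun t => ENNReal.ofReal (c2 * t⁻¹)) t := by
      intro t ht
      by_cases h : t < 1
      · rw [hF]
        simp only [if_pos h]
        rw [Set.indicator_of_mem (Set.mem_Ioo.mpr ⟨ht, h⟩)
          (fun t => ENNReal.ofReal (c2 * t⁻¹))]
        apply ENNReal.ofReal_le_ofReal
        have htpos : 0 < t := h0.trans ht
        rw [max_eq_left (le_of_lt ht)]
        have hr : t ^ (-(2 * s)) ≤ t⁻¹ := by
          rw [← Real.rpow_neg_one t]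
          exact Real.rpow_le_rpow_of_exponent_ge htpos h.le (by linarith)
        calc 2 * ((1 + 16 / s ^ 3) * t ^ (-(2 * s)) / Real.log ρ ^ 2)
            = c2 * t ^ (-(2 * s)) := by rw [hc2]; ring
          _ ≤ c2 * t⁻¹ := mul_le_mul_of_nonneg_left hr hc2nn
      · rw [hF]
        simp only [if_neg h]
        exact zero_le
    calc ∫⁻ t in Ioi ρ, F t
        ≤ ∫⁻ t in Ioi ρ, (Ioo ρ 1).indicator (fun t => ENNReal.ofReal (c2 * t⁻¹)) t :=
          setLIntegral_mono' measurableSet_Ioi hpt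
      _ = ∫⁻ t in Ioo ρ 1, ENNReal.ofReal (c2 * t⁻¹) := by
          rw [lintegral_indicator measurableSet_Ioo, Measure.restrict_restrict measurableSet_Ioo,
            inter_eq_left.2 Ioo_subset_Ioi_self]
      _ = ENNReal.ofReal (∫ t in Ioo ρ 1, c2 * t⁻¹) := by
          rw [← ofReal_integral_eq_lintegral_ofReal]
          · have hInt : IntegrableOn (fun t : ℝ => t⁻¹) (Ioo ρ 1) := by
              apply (ContinuousOn.integrableOn_Icc ?_).mono_set Ioo_subset_Icc_self
              exact continuousOn_inv₀.mono (fun x hx => ne_of_gt (lt_of_lt_of_le h0 hx.1))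
            exact hInt.const_mul c2
          · filter_upwards [ae_restrict_mem measurableSet_Ioo] with t ht
            have htpos : 0 < t := h0.trans ht.1
            positivity
      _ = ENNReal.ofReal (c2 * (-Real.log ρ)) := by
          congr 1
          rw [integral_const_mul]
          congr 1
          have h0mem : (0:ℝ) ∉ uIcc ρ 1 := by
            rw [Set.uIcc_of_le h1.le]
            exact fun h => absurd h.1 (not_le.2 h0)
          rw [← integral_Ioc_eq_integral_Ioo, ← intervalIntegral.integral_of_le h1.le,
            integral_inv h0mem, one_div, Real.log_inv]
  calc ∫⁻ y : ℝ, ∫⁻ x, hker s ρ y x ≤ ∫⁻ y : ℝ, F |y| := step1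
    _ = 2 * ∫⁻ t in Ioi (0:ℝ), F t := lintegral_comp_abs F hFm
    _ = 2 * ((∫⁻ t in Ioc (0:ℝ) ρ, F t) + ∫⁻ t in Ioi ρ, F t) := by
        rw [← lintegral_union measurableSet_Ioi (Ioc_disjoint_Ioi le_rfl),
          Ioc_union_Ioi_eq_Ioi h0.le]
    _ ≤ 2 * (ENNReal.ofReal c2 + ENNReal.ofReal (c2 * (-Real.log ρ))) :=
        mul_le_mul_right (add_le_add pieceA pieceB) 2
    _ = ENNReal.ofReal (4 * (1 + 16 / s ^ 3) *
        ((-Real.log ρ)⁻¹ + (-Real.log ρ)⁻¹ * (-Real.log ρ)⁻¹)) := by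
        rw [← ENNReal.ofReal_add hc2nn (mul_nonneg hc2nn hL.le),
          show (2:ℝ≥0∞) = ENNReal.ofReal 2 from (ENNReal.ofReal_ofNat 2).symm,
          ← ENNReal.ofReal_mul (by norm_num : (0:ℝ) ≤ 2)]
        congr 1
        rw [hc2]
        have hx : Real.log ρ ≠ 0 := hlρ.ne
        field_simp
        ring

lemma energy_bound {s : ℝ} (hs0 : 0 < s) (hs1 : s ≤ 1/2) (c : ℝ) (Ω : Set ℝ)
    {ρ : ℝ} (h0 : 0 < ρ) (h1 : ρ < 1) :
    gagEnergy1 s Ω (phiRhoLog c ρ) ≤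
      ENNReal.ofReal (8 * (1 + 16 / s ^ 3) *
        ((-Real.log ρ)⁻¹ + (-Real.log ρ)⁻¹ * (-Real.log ρ)⁻¹)) := by
  have hm1 : Measurable fun p : ℝ × ℝ => hker s ρ p.2 p.1 :=
    (hker_meas hs0 ρ).comp measurable_swap
  have hm2 : Measurable fun p : ℝ × ℝ => hker s ρ p.1 p.2 := hker_meas hs0 ρ
  calc gagEnergy1 s Ω (phiRhoLog c ρ)
      ≤ ∫⁻ p : ℝ × ℝ, ENNReal.ofReal (|phiRhoLog c ρ p.1 - phiRhoLog c ρ p.2| ^ 2 /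
          |p.1 - p.2| ^ (1 + 2 * s)) := setLIntegral_le_lintegral _ _
    _ ≤ ∫⁻ p : ℝ × ℝ, (hker s ρ p.2 p.1 + hker s ρ p.1 p.2) :=
        lintegral_mono (pointwise_sum hs0 c h0 h1)
    _ = (∫⁻ p : ℝ × ℝ, hker s ρ p.2 p.1) + ∫⁻ p : ℝ × ℝ, hker s ρ p.1 p.2 :=
        lintegral_add_left hm1 _
    _ = (∫⁻ y : ℝ, ∫⁻ x, hker s ρ y x) + ∫⁻ y : ℝ, ∫⁻ x, hker s ρ y x := by
        rw [Measure.volume_eq_prod]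
        rw [lintegral_prod_symm _ hm1.aemeasurable, lintegral_prod _ hm2.aemeasurable]
    _ ≤ ENNReal.ofReal (4 * (1 + 16 / s ^ 3) *
          ((-Real.log ρ)⁻¹ + (-Real.log ρ)⁻¹ * (-Real.log ρ)⁻¹)) +
        ENNReal.ofReal (4 * (1 + 16 / s ^ 3) *
          ((-Real.log ρ)⁻¹ + (-Real.log ρ)⁻¹ * (-Real.log ρ)⁻¹)) :=
        add_le_add (outer_bound hs0 hs1 h0 h1) (outer_bound hs0 hs1 h0 h1)
    _ = ENNReal.ofReal (8 * (1 + 16 / s ^ 3) *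
        ((-Real.log ρ)⁻¹ + (-Real.log ρ)⁻¹ * (-Real.log ρ)⁻¹)) := by
        have hlρ : Real.log ρ < 0 := Real.log_neg h0 h1
        have hCs0 : (0:ℝ) < 1 + 16 / s ^ 3 := by positivity
        have hnn : 0 ≤ 4 * (1 + 16 / s ^ 3) *
            ((-Real.log ρ)⁻¹ + (-Real.log ρ)⁻¹ * (-Real.log ρ)⁻¹) := by
          have hL : 0 < -Real.log ρ := by linarith
          positivity
        rw [← ENNReal.ofReal_add hnn hnn]
        congr 1
        ring

end Stmt19

/-- for `n = 1` and `s ∈ (0, 1/2]`, the Gagliardo energy of the logarithmic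
cutoff `φ_ρ` vanishes as `ρ → 0⁺`. -/
theorem statement19 {s : ℝ} (hs0 : 0 < s) (hs1 : s ≤ 1 / 2) (c : ℝ)
    {Ω : Set ℝ} (hΩo : IsOpen Ω) (hΩb : Bornology.IsBounded Ω)
    (hB2 : Set.Ioo (-2 : ℝ) 2 ⊆ Ω) :
    Filter.Tendsto (fun ρ : ℝ => gagEnergy1 s Ω (phiRhoLog c ρ))
      (nhdsWithin 0 (Set.Ioo (0 : ℝ) 1)) (nhds 0) := by
  have hbound : ∀ᶠ ρ in nhdsWithin 0 (Set.Ioo (0 : ℝ) 1),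
      gagEnergy1 s Ω (phiRhoLog c ρ) ≤
        ENNReal.ofReal (8 * (1 + 16 / s ^ 3) *
          ((-Real.log ρ)⁻¹ + (-Real.log ρ)⁻¹ * (-Real.log ρ)⁻¹)) := by
    filter_upwards [self_mem_nhdsWithin] with ρ hρ
    exact Stmt19.energy_bound hs0 hs1 c Ω hρ.1 hρ.2
  have hL : Filter.Tendsto (fun ρ : ℝ => -Real.log ρ)
      (nhdsWithin 0 (Set.Ioo (0 : ℝ) 1)) Filter.atTop := by
    have h1 : Filter.Tendsto Real.log (nhdsWithin 0 (Set.Ioo (0 : ℝ) 1)) Filter.atBot :=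
      Real.tendsto_log_nhdsGT_zero.mono_left
        (nhdsWithin_mono 0 (fun x hx => hx.1))
    exact Filter.tendsto_neg_atBot_atTop.comp h1
  have hinv : Filter.Tendsto (fun ρ : ℝ => (-Real.log ρ)⁻¹)
      (nhdsWithin 0 (Set.Ioo (0 : ℝ) 1)) (nhds 0) :=
    Filter.Tendsto.comp tendsto_inv_atTop_zero hL
  have hreal : Filter.Tendsto (fun ρ : ℝ => 8 * (1 + 16 / s ^ 3) *
      ((-Real.log ρ)⁻¹ + (-Real.log ρ)⁻¹ * (-Real.log ρ)⁻¹))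
      (nhdsWithin 0 (Set.Ioo (0 : ℝ) 1)) (nhds 0) := by
    have := ((hinv.add (hinv.mul hinv)).const_mul (8 * (1 + 16 / s ^ 3)))
    simpa using this
  have hupper : Filter.Tendsto (fun ρ : ℝ => ENNReal.ofReal (8 * (1 + 16 / s ^ 3) *
      ((-Real.log ρ)⁻¹ + (-Real.log ρ)⁻¹ * (-Real.log ρ)⁻¹)))
      (nhdsWithin 0 (Set.Ioo (0 : ℝ) 1)) (nhds 0) := by
    have := ENNReal.tendsto_ofReal hreal
    simpa using this
  exact tendsto_of_tendsto_of_tendsto_of_le_of_le' tendsto_const_nhds hupper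
    (Filter.Eventually.of_forall fun ρ => zero_le) hbound
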